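/- arXiv:2511.06526 — 4 statements merged into one kernel-verified Lean document; each statement's English description precedes it below -/
import Mathlib

section
/- If T is a tree with no uncountable branch (no uncountable linearly ordered subset), then the tree σT of well-ordered downward-closed chains of T ordered by end-extension also has no uncountable branch. -/
/-- The σ-tree of well-ordered downward-closed chains of `T`. -/
def SigmaTreeW (T : Type u) [Preorder T] : Type u :=
  {c : Set T // IsChain (· ≤ ·) c ∧ (∀ x ∈ c, ∀ y : T, y ≤ x → y ∈ c) ∧
    c.WellFoundedOn (· < ·)}

/-- The end-extension order on the σ-tree. -/
def SigmaWLE {T : Type u} [Preorder T] (c d : SigmaTreeW T) : Prop :=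
  c.1 ⊆ d.1 ∧ ∀ x ∈ c.1, ∀ y ∈ d.1, y ∉ c.1 → x < y

/-- If `T` is a tree with no uncountable branch (every linearly ordered subset of `T` is
countable), then `σT`, the tree of well-ordered downward-closed chains of `T` ordered by
end-extension, also has no uncountable branch. -/
theorem stmt3 {T : Type u} [PartialOrder T]
    (hT : ∀ c : Set T, IsChain (· ≤ ·) c → c.Countable) :
    ∀ C : Set (SigmaTreeW T), IsChain SigmaWLE C → C.Countable := by
  intro C hC
  classical
  set U : Set T := {x | ∃ c ∈ C, x ∈ c.1} with hUdef
  have hUchain : IsChain (· ≤ ·) U := by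
    rintro x ⟨c, hc, hxc⟩ y ⟨d, hd, hyd⟩ hxy
    rcases eq_or_ne c d with rfl | hcd
    · exact c.2.1 hxc hyd hxy
    · rcases hC hc hd hcd with h | h
      · exact d.2.1 (h.1 hxc) hyd hxy
      · exact c.2.1 hxc (h.1 hyd) hxy
  have hUcount : U.Countable := hT U hUchain
  -- key: any element of U outside c (c ∈ C) gives a least element of U \ c
  have key : ∀ c : SigmaTreeW T, c ∈ C → ∀ x, x ∈ U → x ∉ c.1 →
      ∃ m, m ∈ U ∧ m ∉ c.1 ∧ ∀ z ∈ U, z ∉ c.1 → m ≤ z := by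
    rintro c hc x ⟨d, hd, hxd⟩ hxc
    have hwf : (d.1 ∩ {y | y ∉ c.1}).IsWF := d.2.2.2.subset Set.inter_subset_left
    have hne : (d.1 ∩ {y | y ∉ c.1}).Nonempty := ⟨x, hxd, hxc⟩
    set m := hwf.min hne with hm
    have hmmem := hwf.min_mem hne
    refine ⟨m, ⟨d, hd, hmmem.1⟩, hmmem.2, ?_⟩
    have hled : ∀ z ∈ d.1, z ∉ c.1 → m ≤ z := by
      intro z hzd hzc
      rcases eq_or_ne m z with rfl | hmz
      · exact le_refl _
      · rcases d.2.1 hmmem.1 hzd hmz with h | h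
        · exact h
        · exact absurd (lt_of_le_of_ne h hmz.symm) (hwf.not_lt_min hne ⟨hzd, hzc⟩)
    rintro z ⟨e, he, hze⟩ hzc
    rcases eq_or_ne e d with rfl | hed
    · exact hled z hze hzc
    · rcases hC he hd hed with h | h
      · exact hled z (h.1 hze) hzc
      · by_cases hzd : z ∈ d.1
        · exact hled z hzd hzc
        · exact le_of_lt (h.2 m hmmem.1 z hze hzd)
  -- the injection
  let F : SigmaTreeW T → Option T := fun c =>
    if h : ∃ m, m ∈ U ∧ m ∉ c.1 ∧ ∀ z ∈ U, z ∉ c.1 → m ≤ z then some h.choose else none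
  have himg : F '' C ⊆ insert none (some '' U) := by
    rintro _ ⟨c, _, rfl⟩
    by_cases h : ∃ m, m ∈ U ∧ m ∉ c.1 ∧ ∀ z ∈ U, z ∉ c.1 → m ≤ z
    · right
      refine ⟨h.choose, h.choose_spec.1, ?_⟩
      simp only [F, dif_pos h]
    · left
      simp only [F, dif_neg h]
  have hinjaux : ∀ c ∈ C, ∀ d ∈ C, SigmaWLE c d → c.1 ≠ d.1 → F c ≠ F d := by
    intro c hc d hd hcd hne
    obtain ⟨x, hxd, hxc⟩ : ∃ x, x ∈ d.1 ∧ x ∉ c.1 := by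
      by_contra hcon
      push_neg at hcon
      exact hne (le_antisymm hcd.1 fun y hy => hcon y hy)
    have hcex : ∃ m, m ∈ U ∧ m ∉ c.1 ∧ ∀ z ∈ U, z ∉ c.1 → m ≤ z :=
      key c hc x ⟨d, hd, hxd⟩ hxc
    have hFc : F c = some hcex.choose := dif_pos hcex
    -- the least element of U \ c lies in d
    have hmd : hcex.choose ∈ d.1 := by
      have hle : hcex.choose ≤ x := hcex.choose_spec.2.2 x ⟨d, hd, hxd⟩ hxc
      exact d.2.2.1 x hxd _ hle
    by_cases h : ∃ m, m ∈ U ∧ m ∉ d.1 ∧ ∀ z ∈ U, z ∉ d.1 → m ≤ z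
    · have hFd : F d = some h.choose := dif_pos h
      rw [hFc, hFd]
      intro heq
      exact h.choose_spec.2.1 (Option.some_injective _ heq ▸ hmd)
    · have hFd : F d = none := dif_neg h
      rw [hFc, hFd]
      simp
  have hinj : Set.InjOn F C := by
    intro c hc d hd heq
    by_contra hne
    have hne' : c.1 ≠ d.1 := fun h => hne (Subtype.ext h)
    rcases hC hc hd hne with h | h
    · exact hinjaux c hc d hd h hne' heq
    · exact hinjaux d hd c hc h (Ne.symm hne') heq.symm
  have himgc : (F '' C).Countable := ((hUcount.image some).insert none).mono himg
  exact (Set.countable_of_injective_of_countable_image hinj himgc)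
end

section
/- A condition p is strongly (P, M)-generic if and only if p forces that the intersection of the generic filter with M is a V-generic filter on the poset P ∩ M. -/
/-- A condition `p` is strongly `(P, M)`-generic (every `q ≤ p` has a residue into `M`, i.e. a
condition `r ∈ M` such that every `w ∈ P ∩ M` extending `r` is compatible with `q`) if and only
if `p` forces that the generic filter intersected with `M` is a `V`-generic filter on `P ∩ M`;
combinatorially: for every subset `D` of `P ∩ M` dense in `P ∩ M` and every `q ≤ p`, some
extension of `q` lies below an element of `D`. -/
theorem stmt6 {P : Type*} [Preorder P] (M : Set P) (p : P) :
    (∀ q : P, q ≤ p → ∃ r ∈ M, ∀ w ∈ M, w ≤ r → ∃ z : P, z ≤ w ∧ z ≤ q) ↔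
    (∀ D : Set P, D ⊆ M → (∀ w ∈ M, ∃ d ∈ D, d ≤ w) →
      ∀ q : P, q ≤ p → ∃ r : P, r ≤ q ∧ ∃ d ∈ D, r ≤ d) := by
  constructor
  · intro h D hDM hdense q hq
    obtain ⟨r, hrM, hr⟩ := h q hq
    obtain ⟨d, hdD, hdr⟩ := hdense r hrM
    obtain ⟨z, hzd, hzq⟩ := hr d (hDM hdD) hdr
    exact ⟨z, hzq, d, hdD, hzd⟩
  · intro h q hq
    by_contra hres
    push_neg at hres
    set D : Set P := {w | w ∈ M ∧ ∀ z : P, z ≤ w → ¬ z ≤ q} with hD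
    have hDM : D ⊆ M := fun w hw => hw.1
    have hdense : ∀ w ∈ M, ∃ d ∈ D, d ≤ w := by
      intro w hw
      obtain ⟨w', hw'M, hw'w, hw'⟩ := hres w hw
      exact ⟨w', ⟨hw'M, fun z hz1 hz2 => hw' z hz1 hz2⟩, hw'w⟩
    obtain ⟨r, hrq, d, hdD, hrd⟩ := h D hDM hdense q hq
    exact hdD.2 r hrd hrq
end

section
/- Let κ ≤ λ be regular cardinals and let M be a set such that M ∩ λ is an ordinal, κ ∈ M, and the Levy collapse conditions are suitably absolute to M. Then for any condition p in Coll(κ, <λ), the restriction p ∩ M is a residue of p into M: every condition w ∈ Coll(κ, <λ) ∩ M extending p ∩ M is compatible with p. Consequently Coll(κ, <λ) is strongly proper with respect to M. -/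
/-- A condition in the Levy collapse `Coll(κ, <λ)`: a partial function `p : λ × κ → λ` (coded as
a functional set of triples) of size `< κ` with `p(α, β) < α` for all `(α, β)` in its domain.
Conditions are ordered by reverse inclusion, so `q ≤ p` iff `p ⊆ q`. -/
def IsLevyCond (κ lam : Cardinal.{0}) (p : Set ((Ordinal × Ordinal) × Ordinal)) : Prop :=
  (∀ x ∈ p, x.1.1 < lam.ord ∧ x.1.2 < κ.ord ∧ x.2 < x.1.1) ∧
  (∀ x ∈ p, ∀ y ∈ p, x.1 = y.1 → x.2 = y.2) ∧
  Cardinal.mk p < Cardinal.lift.{1} κ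

lemma isLevyCond_subset {κ lam : Cardinal.{0}} {p q : Set ((Ordinal × Ordinal) × Ordinal)}
    (hp : IsLevyCond κ lam p) (hq : q ⊆ p) : IsLevyCond κ lam q := by
  refine ⟨fun x hx => hp.1 x (hq hx), fun x hx y hy => hp.2.1 x (hq hx) y (hq hy),
    lt_of_le_of_lt (Cardinal.mk_le_mk_of_subset hq) hp.2.2⟩

lemma isLevyCond_union {κ lam : Cardinal.{0}} (hκ : κ.IsRegular)
    {p w : Set ((Ordinal × Ordinal) × Ordinal)}
    (hp : IsLevyCond κ lam p) (hw : IsLevyCond κ lam w)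
    (hcomp : ∀ x ∈ p, ∀ y ∈ w, x.1 = y.1 → x.2 = y.2) : IsLevyCond κ lam (p ∪ w) := by
  refine ⟨?_, ?_, ?_⟩
  · rintro x (hx | hx)
    · exact hp.1 x hx
    · exact hw.1 x hx
  · rintro x (hx | hx) y (hy | hy) hxy
    · exact hp.2.1 x hx y hy hxy
    · exact hcomp x hx y hy hxy
    · exact (hcomp y hy x hx hxy.symm).symm
    · exact hw.2.1 x hx y hy hxy
  · refine lt_of_le_of_lt (Cardinal.mk_union_le p w) ?_
    have h0 : Cardinal.aleph0 ≤ Cardinal.lift.{1} κ := by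
      simpa using Cardinal.lift_le.{1}.2 hκ.aleph0_le
    exact Cardinal.add_lt_of_lt h0 hp.2.2 hw.2.2

/-- Let `κ ≤ λ` be regular cardinals and `M` a suitable model whose intersection with `λ` is an
ordinal `μ` and whose Levy collapse conditions are exactly those with domain below `μ`.  Then for
every condition `p ∈ Coll(κ, <λ)`, the restriction `p ∩ M` is a condition of `M` and is a residue
of `p` into `M`: every `w ∈ Coll(κ, <λ) ∩ M` extending `p ∩ M` is compatible with `p`.
Consequently `Coll(κ, <λ)` is strongly proper with respect to `M`. -/
theorem stmt7 (κ lam : Cardinal.{0}) (hκ : κ.IsRegular) (hlam : lam.IsRegular)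
    (hkl : κ ≤ lam) (μ : Ordinal) (hμ : μ ≤ lam.ord)
    (M : Set (Set ((Ordinal × Ordinal) × Ordinal)))
    (hM : M = {w | IsLevyCond κ lam w ∧ ∀ x ∈ w, x.1.1 < μ}) :
    (∀ p : Set ((Ordinal × Ordinal) × Ordinal), IsLevyCond κ lam p →
      (p ∩ {x | x.1.1 < μ}) ∈ M ∧
      ∀ w ∈ M, (p ∩ {x | x.1.1 < μ}) ⊆ w →
        ∃ q : Set ((Ordinal × Ordinal) × Ordinal), IsLevyCond κ lam q ∧ w ⊆ q ∧ p ⊆ q) ∧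
    -- strong properness with respect to M:
    (∀ p ∈ M, ∃ q : Set ((Ordinal × Ordinal) × Ordinal), IsLevyCond κ lam q ∧ p ⊆ q ∧
      ∀ q' : Set ((Ordinal × Ordinal) × Ordinal), IsLevyCond κ lam q' → q ⊆ q' →
        ∃ r ∈ M, ∀ w ∈ M, r ⊆ w →
          ∃ z : Set ((Ordinal × Ordinal) × Ordinal), IsLevyCond κ lam z ∧ w ⊆ z ∧ q' ⊆ z) := by
  subst hM
  have main : ∀ p : Set ((Ordinal × Ordinal) × Ordinal), IsLevyCond κ lam p →
      (p ∩ {x | x.1.1 < μ}) ∈ {w | IsLevyCond κ lam w ∧ ∀ x ∈ w, x.1.1 < μ} ∧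
      ∀ w ∈ {w | IsLevyCond κ lam w ∧ ∀ x ∈ w, x.1.1 < μ}, (p ∩ {x | x.1.1 < μ}) ⊆ w →
        ∃ q, IsLevyCond κ lam q ∧ w ⊆ q ∧ p ⊆ q := by
    intro p hp
    constructor
    · exact ⟨isLevyCond_subset hp Set.inter_subset_left, fun x hx => hx.2⟩
    · rintro w ⟨hwc, hwμ⟩ hsub
      refine ⟨w ∪ p, isLevyCond_union hκ hwc hp ?_, Set.subset_union_left,
        Set.subset_union_right⟩
      intro x hx y hy hxy
      have hyμ : y.1.1 < μ := by rw [← hxy]; exact hwμ x hx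
      exact hwc.2.1 x hx y (hsub ⟨hy, hyμ⟩) hxy
  refine ⟨main, ?_⟩
  rintro p ⟨hpc, hpμ⟩
  refine ⟨p, hpc, subset_rfl, ?_⟩
  intro q' hq' hpq'
  obtain ⟨hrM, hres⟩ := main q' hq'
  exact ⟨q' ∩ {x | x.1.1 < μ}, hrM, hres⟩
end

section
/- If κ is a weakly compact cardinal, then the weakly compact filter F_wc, generated by the sets X_{A,φ} = {α < κ : if V_κ ⊨ φ(A) then V_α ⊨ φ(A ∩ V_α)} for Π¹₁-formulas φ and A ⊆ V_κ, is a proper filter on κ: every finite intersection of generators is nonempty (indeed unbounded in κ). -/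
open FirstOrder

/-- The first-order language with one binary relation `∈`, one unary predicate for the parameter
`A`, and one unary predicate for the second-order variable `X`. -/
def LWC : FirstOrder.Language :=
  { Functions := fun _ => Empty
    Relations := fun n => match n with
      | 1 => Fin 2
      | 2 => Unit
      | _ => Empty }

/-- The rank-initial segment `V_α` of the set-theoretic universe. -/
def VType (α : Ordinal.{0}) : Type 1 := {x : ZFSet.{0} // x.rank < α}

/-- The `LWC`-structure on `V_α` with membership `∈`, the predicate `A ∩ V_α`, and the predicate
`X ∩ V_α` interpreting the second-order variable. -/
def strWC (α : Ordinal.{0}) (A X : Set ZFSet.{0}) : LWC.Structure (VType α) where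
  funMap := fun {_} f _ => f.elim
  RelMap := fun {n} r v =>
    match n, r, v with
    | 1, i, v => if (show Fin 2 from i) = 0 then (v 0).1 ∈ A else (v 0).1 ∈ X
    | 2, _, v => (v 0).1 ∈ (v 1).1

/-- `V_α ⊨ φ(A ∩ V_α)` for the Π¹₁-formula `∀ X ψ`: the first-order sentence `ψ` (in the
language with `∈`, `A`, `X`) holds in `V_α` for every interpretation `X` of the second-order
variable. -/
def SatPi11 (ψ : LWC.Sentence) (α : Ordinal.{0}) (A : Set ZFSet.{0}) : Prop :=
  ∀ X : Set ZFSet.{0},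
    letI := strWC α A X
    ψ.Realize (VType α)

/-- `κ` is weakly compact (Π¹₁-indescribable): every Π¹₁ statement true in `V_κ` with a
parameter `A ⊆ V_κ` reflects to some `V_α` with `α < κ`. -/
def WeaklyCompactWC (κ : Ordinal.{0}) : Prop :=
  ∀ (ψ : LWC.Sentence) (A : Set ZFSet.{0}), SatPi11 ψ κ A → ∃ α < κ, SatPi11 ψ α A

namespace WC
open FirstOrder.Language FirstOrder.Language.BoundedFormula

abbrev BF (k : ℕ) := LWC.BoundedFormula Empty k

def relMem : LWC.Relations 2 := Unit.unit
def relA : LWC.Relations 1 := (0 : Fin 2)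
def relX : LWC.Relations 1 := (1 : Fin 2)
def v' {k} (i : Fin k) : LWC.Term (Empty ⊕ Fin k) := Term.var (Sum.inr i)

def memF {k} (a b : Fin k) : BF k := relMem.boundedFormula₂ (v' a) (v' b)
def eqF {k} (a b : Fin k) : BF k := Term.bdEqual (v' a) (v' b)
def inAF {k} (a : Fin k) : BF k := relA.boundedFormula₁ (v' a)
def inXF {k} (a : Fin k) : BF k := relX.boundedFormula₁ (v' a)

def Rl (α : Ordinal.{0}) (B X : Set ZFSet.{0}) {k} (φ : BF k) (xs : Fin k → VType α) : Prop :=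
  @BoundedFormula.Realize LWC (VType α) (strWC α B X) Empty k φ default xs

def RlS (α : Ordinal.{0}) (B X : Set ZFSet.{0}) (φ : LWC.Sentence) : Prop :=
  @FirstOrder.Language.Sentence.Realize LWC (VType α) (strWC α B X) φ

variable {α : Ordinal.{0}} {B X : Set ZFSet.{0}} {k : ℕ}

lemma satPi11_def {ψ A} : SatPi11 ψ α A ↔ ∀ X, RlS α A X ψ := Iff.rfl
lemma rlS_eq (φ : LWC.Sentence) : RlS α B X φ ↔ Rl α B X φ default := Iff.rfl

@[simp] lemma rl_memF {a b : Fin k} {xs} : Rl α B X (memF a b) xs ↔ (xs a).1 ∈ (xs b).1 := Iff.rfl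
@[simp] lemma rl_eqF {a b : Fin k} {xs} : Rl α B X (eqF a b) xs ↔ xs a = xs b := Iff.rfl
@[simp] lemma rl_inAF {a : Fin k} {xs} : Rl α B X (inAF a) xs ↔ (xs a).1 ∈ B := by
  unfold Rl inAF
  letI := strWC α B X
  rw [BoundedFormula.realize_rel₁]
  simp [strWC, relA, v', Structure.RelMap]
  rfl

@[simp] lemma rl_inf {φ ψ : BF k} {xs} : Rl α B X (φ ⊓ ψ) xs ↔ Rl α B X φ xs ∧ Rl α B X ψ xs := by
  letI := strWC α B X; exact BoundedFormula.realize_inf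
@[simp] lemma rl_sup {φ ψ : BF k} {xs} : Rl α B X (φ ⊔ ψ) xs ↔ Rl α B X φ xs ∨ Rl α B X ψ xs := by
  letI := strWC α B X; exact BoundedFormula.realize_sup
@[simp] lemma rl_not {φ : BF k} {xs} : Rl α B X φ.not xs ↔ ¬ Rl α B X φ xs := by
  letI := strWC α B X; exact BoundedFormula.realize_not
@[simp] lemma rl_imp {φ ψ : BF k} {xs} : Rl α B X (φ.imp ψ) xs ↔ (Rl α B X φ xs → Rl α B X ψ xs) := by
  letI := strWC α B X; exact BoundedFormula.realize_imp
@[simp] lemma rl_iff {φ ψ : BF k} {xs} : Rl α B X (φ.iff ψ) xs ↔ (Rl α B X φ xs ↔ Rl α B X ψ xs) := by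
  letI := strWC α B X; exact BoundedFormula.realize_iff
@[simp] lemma rl_all {φ : BF (k+1)} {xs} : Rl α B X φ.all xs ↔ ∀ a : VType α, Rl α B X φ (Fin.snoc xs a) := by
  letI := strWC α B X; exact BoundedFormula.realize_all
@[simp] lemma rl_ex {φ : BF (k+1)} {xs} : Rl α B X φ.ex xs ↔ ∃ a : VType α, Rl α B X φ (Fin.snoc xs a) := by
  letI := strWC α B X; exact BoundedFormula.realize_ex
@[simp] lemma rl_top {xs} : Rl α B X (⊤ : BF k) xs ↔ True := by
  letI := strWC α B X; exact BoundedFormula.realize_top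

end WC
namespace WC
open FirstOrder.Language FirstOrder.Language.BoundedFormula

variable {α : Ordinal.{0}} {B X : Set ZFSet.{0}} {k : ℕ}

lemma mem_lt {x : VType α} {y : ZFSet} (h : y ∈ x.1) : y.rank < α :=
  (ZFSet.rank_lt_of_mem h).trans x.2

/-- `z = {u}` -/
def eqSingF {k} (z u : Fin k) : BF k :=
  ((memF (Fin.last k) z.castSucc).iff (eqF (Fin.last k) u.castSucc)).all

@[simp] lemma rl_eqSingF {z u : Fin k} {xs} :
    Rl α B X (eqSingF z u) xs ↔ (xs z).1 = {(xs u).1} := by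
  simp only [eqSingF, rl_all, rl_iff, rl_memF, rl_eqF, Fin.snoc_last, Fin.snoc_castSucc]
  constructor
  · intro h
    apply ZFSet.ext
    intro w
    rw [ZFSet.mem_singleton]
    constructor
    · intro hw
      have := (h ⟨w, mem_lt hw⟩).1 hw
      exact congrArg Subtype.val this
    · rintro rfl
      exact (h (xs u)).2 rfl
  · intro h
    intro a
    rw [h, ZFSet.mem_singleton]
    exact ⟨fun hw => Subtype.ext hw, fun hw => congrArg Subtype.val hw⟩

/-- `z = {u, x}` -/
def eqPrF {k} (z u x : Fin k) : BF k :=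
  ((memF (Fin.last k) z.castSucc).iff
    ((eqF (Fin.last k) u.castSucc) ⊔ (eqF (Fin.last k) x.castSucc))).all

@[simp] lemma rl_eqPrF {z u x : Fin k} {xs} :
    Rl α B X (eqPrF z u x) xs ↔ (xs z).1 = {(xs u).1, (xs x).1} := by
  simp only [eqPrF, rl_all, rl_iff, rl_sup, rl_memF, rl_eqF, Fin.snoc_last, Fin.snoc_castSucc]
  constructor
  · intro h
    apply ZFSet.ext
    intro w
    rw [ZFSet.mem_pair]
    constructor
    · intro hw
      rcases (h ⟨w, mem_lt hw⟩).1 hw with h' | h'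
      · exact Or.inl (congrArg Subtype.val h')
      · exact Or.inr (congrArg Subtype.val h')
    · rintro (rfl | rfl)
      · exact (h (xs u)).2 (Or.inl rfl)
      · exact (h (xs x)).2 (Or.inr rfl)
  · intro h a
    rw [h, ZFSet.mem_pair]
    constructor
    · rintro (hw | hw)
      · exact Or.inl (Subtype.ext hw)
      · exact Or.inr (Subtype.ext hw)
    · rintro (rfl | rfl)
      · exact Or.inl rfl
      · exact Or.inr rfl

/-- `p = pair u x` (Kuratowski) -/
def eqPairF {k} (p u x : Fin k) : BF k :=
  ((memF (Fin.last k) p.castSucc) ⊓ eqSingF (Fin.last k) u.castSucc).ex ⊓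
  (((memF (Fin.last k) p.castSucc) ⊓ eqPrF (Fin.last k) u.castSucc x.castSucc).ex ⊓
  ((memF (Fin.last k) p.castSucc).imp
    ((eqSingF (Fin.last k) u.castSucc) ⊔ (eqPrF (Fin.last k) u.castSucc x.castSucc))).all)

@[simp] lemma rl_eqPairF {p u x : Fin k} {xs} :
    Rl α B X (eqPairF p u x) xs ↔ (xs p).1 = ZFSet.pair (xs u).1 (xs x).1 := by
  simp only [eqPairF, rl_inf, rl_ex, rl_all, rl_imp, rl_sup, rl_inf, rl_memF, rl_eqSingF,
    rl_eqPrF, Fin.snoc_last, Fin.snoc_castSucc]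
  constructor
  · rintro ⟨⟨a, ha, ha'⟩, ⟨b, hb, hb'⟩, hall⟩
    apply ZFSet.ext
    intro w
    show w ∈ (xs p).1 ↔ w ∈ ({{(xs u).1}, {(xs u).1, (xs x).1}} : ZFSet)
    rw [ZFSet.mem_pair]
    constructor
    · intro hw
      rcases hall ⟨w, mem_lt hw⟩ hw with h' | h'
      · exact Or.inl h'
      · exact Or.inr h'
    · rintro (rfl | rfl)
      · rwa [← ha']
      · rwa [← hb']
  · intro h
    have hsing : ({(xs u).1} : ZFSet) ∈ (xs p).1 := by
      rw [h]; exact ZFSet.mem_insert _ _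
    have hpr : ({(xs u).1, (xs x).1} : ZFSet) ∈ (xs p).1 := by
      rw [h]
      exact ZFSet.mem_insert_of_mem _ (ZFSet.mem_singleton.2 rfl)
    refine ⟨⟨⟨_, mem_lt hsing⟩, hsing, rfl⟩, ⟨⟨_, mem_lt hpr⟩, hpr, rfl⟩, ?_⟩
    intro a ha
    rw [h] at ha
    rcases ZFSet.mem_pair.1 ha with h' | h'
    · exact Or.inl h'
    · exact Or.inr h'

end WC
namespace WC
open FirstOrder.Language FirstOrder.Language.BoundedFormula

variable {α : Ordinal.{0}} {B X : Set ZFSet.{0}} {k : ℕ}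

/-- singleton towers used as tags -/
def towerZ : ℕ → ZFSet.{0}
  | 0 => ∅
  | i + 1 => {towerZ i}

@[simp] lemma rank_towerZ (i : ℕ) : (towerZ i).rank = i := by
  induction i with
  | zero => exact ZFSet.rank_empty
  | succ i ih =>
      show ZFSet.rank {towerZ i} = _
      rw [ZFSet.rank_singleton, ih]
      rw [Nat.cast_succ, Ordinal.add_one_eq_succ]

lemma towerZ_injective : Function.Injective towerZ := by
  intro a b h
  have := congrArg ZFSet.rank h
  rw [rank_towerZ, rank_towerZ] at this
  exact_mod_cast this

/-- `x = towerZ i` -/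
def singTF : ℕ → ∀ {k}, Fin k → BF k
  | 0, k, x => ((memF (Fin.last k) x.castSucc).not).all
  | i + 1, k, x => ((singTF i (Fin.last k)) ⊓ eqSingF x.castSucc (Fin.last k)).ex

@[simp] lemma rl_singTF {i : ℕ} {x : Fin k} {xs} :
    Rl α B X (singTF i x) xs ↔ (xs x).1 = towerZ i := by
  induction i generalizing k with
  | zero =>
      simp only [singTF, rl_all, rl_not, rl_memF, Fin.snoc_last, Fin.snoc_castSucc]
      constructor
      · intro h
        rw [towerZ, ZFSet.eq_empty]
        intro y hy
        exact h ⟨y, mem_lt hy⟩ hy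
      · intro h a ha
        rw [h] at ha
        exact ZFSet.notMem_empty _ ha
  | succ i ih =>
      simp only [singTF, rl_ex, rl_inf, ih, rl_eqSingF, Fin.snoc_last, Fin.snoc_castSucc]
      constructor
      · rintro ⟨a, h1, h2⟩
        rw [h2, h1]
        rfl
      · intro h
        have hmem : towerZ i ∈ (xs x).1 := by
          rw [h]; exact ZFSet.mem_singleton.2 rfl
        exact ⟨⟨towerZ i, mem_lt hmem⟩, rfl, h⟩

/-- `∃ u p, u = towerZ (i+1) ∧ p = pair u x` -/
def pairXF (i : ℕ) {k} (x : Fin k) : BF k :=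
  (((singTF (i+1) ((Fin.last k).castSucc)) ⊓
    eqPairF (Fin.last (k+1)) ((Fin.last k).castSucc) x.castSucc.castSucc).ex).ex

lemma tower_lt_pair {i : ℕ} {x : ZFSet} :
    (towerZ (i+1)).rank < (ZFSet.pair (towerZ (i+1)) x).rank := by
  have h1 : towerZ (i+1) ∈ ({towerZ (i+1)} : ZFSet) := ZFSet.mem_singleton.2 rfl
  have h2 : ({towerZ (i+1)} : ZFSet) ∈ ZFSet.pair (towerZ (i+1)) x := ZFSet.mem_insert _ _
  exact (ZFSet.rank_lt_of_mem h1).trans (ZFSet.rank_lt_of_mem h2)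

@[simp] lemma rl_pairXF {i : ℕ} {x : Fin k} {xs} :
    Rl α B X (pairXF i x) xs ↔ (ZFSet.pair (towerZ (i+1)) (xs x).1).rank < α := by
  simp only [pairXF, rl_ex, rl_inf, rl_singTF, rl_eqPairF, Fin.snoc_last, Fin.snoc_castSucc]
  constructor
  · rintro ⟨u, p, hu, hp⟩
    rw [hu] at hp
    rw [← hp]
    exact p.2
  · intro h
    refine ⟨⟨towerZ (i+1), tower_lt_pair.trans h⟩, ⟨ZFSet.pair (towerZ (i+1)) (xs x).1, h⟩, rfl, rfl⟩

/-- `∃ u p, u = towerZ (i+1) ∧ p = pair u x ∧ p ∈ A` -/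
def thetaF (i : ℕ) {k} (x : Fin k) : BF k :=
  (((singTF (i+1) ((Fin.last k).castSucc)) ⊓
    (eqPairF (Fin.last (k+1)) ((Fin.last k).castSucc) x.castSucc.castSucc ⊓
     inAF (Fin.last (k+1)))).ex).ex

@[simp] lemma rl_thetaF {i : ℕ} {x : Fin k} {xs} :
    Rl α B X (thetaF i x) xs ↔
      (ZFSet.pair (towerZ (i+1)) (xs x).1).rank < α ∧
        ZFSet.pair (towerZ (i+1)) (xs x).1 ∈ B := by
  simp only [thetaF, rl_ex, rl_inf, rl_singTF, rl_eqPairF, rl_inAF, Fin.snoc_last,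
    Fin.snoc_castSucc]
  constructor
  · rintro ⟨u, p, hu, hp, hA⟩
    rw [hu] at hp
    rw [← hp]
    exact ⟨p.2, hA⟩
  · rintro ⟨h1, h2⟩
    exact ⟨⟨towerZ (i+1), tower_lt_pair.trans h1⟩,
      ⟨ZFSet.pair (towerZ (i+1)) (xs x).1, h1⟩, rfl, rfl, h2⟩

/-- closure sentence: every `x` has its tagged pair in the model -/
def clF (i : ℕ) : LWC.Sentence := (pairXF i (Fin.last 0)).all

lemma rlS_clF {i : ℕ} :
    RlS α B X (clF i) ↔ ∀ x : VType α, (ZFSet.pair (towerZ (i+1)) x.1).rank < α := by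
  rw [rlS_eq]
  show Rl α B X (pairXF i (Fin.last 0)).all default ↔ _
  rw [rl_all]
  constructor
  · intro h x
    have := h x
    rw [rl_pairXF] at this
    simpa [Fin.snoc] using this
  · intro h x
    rw [rl_pairXF]
    simpa [Fin.snoc] using h x

/-- marker sentence : `∃ x θ_n(x)` -/
def markerF (n : ℕ) : LWC.Sentence := (thetaF n (Fin.last 0)).ex

lemma rlS_markerF {n : ℕ} :
    RlS α B X (markerF n) ↔ ∃ x : VType α,
      (ZFSet.pair (towerZ (n+1)) x.1).rank < α ∧ ZFSet.pair (towerZ (n+1)) x.1 ∈ B := by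
  rw [rlS_eq]
  show Rl α B X (thetaF n (Fin.last 0)).ex default ↔ _
  rw [rl_ex]
  constructor
  · rintro ⟨x, hx⟩
    rw [rl_thetaF] at hx
    exact ⟨x, by simpa [Fin.snoc] using hx⟩
  · rintro ⟨x, hx⟩
    refine ⟨x, ?_⟩
    rw [rl_thetaF]
    simpa [Fin.snoc] using hx

/-- `∃ x, x ∈ A` -/
def existsAF : LWC.Sentence := (inAF (Fin.last 0)).ex

lemma rlS_existsAF : RlS α B X existsAF ↔ ∃ x : VType α, x.1 ∈ B := by
  rw [rlS_eq]
  show Rl α B X (inAF (Fin.last 0)).ex default ↔ _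
  rw [rl_ex]
  refine ⟨fun ⟨x, hx⟩ => ⟨x, by simpa [Fin.snoc] using rl_inAF.1 hx⟩, fun ⟨x, hx⟩ => ⟨x, ?_⟩⟩
  rw [rl_inAF]
  simpa [Fin.snoc] using hx

end WC
namespace WC
open FirstOrder.Language FirstOrder.Language.BoundedFormula

variable {α : Ordinal.{0}} {B X : Set ZFSet.{0}} {k : ℕ}

/-- substitute the formula `θ` for the atomic predicate `A` in an atomic formula -/
def substAtom (θ : ∀ {k : ℕ}, Fin k → BF k) :
    ∀ {k l : ℕ}, LWC.Relations l → (Fin l → LWC.Term (Empty ⊕ Fin k)) → BF k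
  | _, 0, R, _ => Empty.elim R
  | k, 1, R, ts =>
      @ite _ (R = (0 : Fin 2)) (instDecidableEqFin 2 R 0)
        (match ts 0 with
        | .var (Sum.inr j) => θ j
        | .var (Sum.inl e) => e.elim
        | .func f _ => Empty.elim f)
      (.rel R ts)
  | _, 2, R, ts => .rel R ts
  | _, _ + 3, R, _ => Empty.elim R

/-- substitute the formula `θ` for the atomic predicate `A` throughout a formula -/
def substA (θ : ∀ {k : ℕ}, Fin k → BF k) : ∀ {k : ℕ}, BF k → BF k
  | _, .falsum => .falsum
  | _, .equal t₁ t₂ => .equal t₁ t₂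
  | _, .rel R ts => substAtom @θ R ts
  | _, .imp f g => (substA @θ f).imp (substA @θ g)
  | _, .all f => (substA @θ f).all

lemma term_realize_eq {B' X' : Set ZFSet.{0}} (v : Empty ⊕ Fin k → VType α)
    (t : LWC.Term (Empty ⊕ Fin k)) :
    @Term.realize LWC (VType α) (strWC α B X) _ v t =
      @Term.realize LWC (VType α) (strWC α B' X') _ v t := by
  cases t with
  | var => rfl
  | func f _ => exact Empty.elim f

lemma rl_substAtom {Areal : Set ZFSet.{0}} (θ : ∀ {k : ℕ}, Fin k → BF k)
    (H : ∀ {k : ℕ} (x : Fin k) (xs : Fin k → VType α), Rl α B X (θ x) xs ↔ (xs x).1 ∈ Areal)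
    {l : ℕ} (R : LWC.Relations l) (ts : Fin l → LWC.Term (Empty ⊕ Fin k))
    (xs : Fin k → VType α) :
    Rl α B X (substAtom @θ R ts) xs ↔ Rl α Areal X (.rel R ts) xs := by
  have hts : ∀ (m : ℕ) (ts : Fin m → LWC.Term (Empty ⊕ Fin k)) (i : Fin m),
      ∃ y : Empty ⊕ Fin k, ts i = .var y := by
    intro m ts i
    cases h : ts i with
    | var y => exact ⟨y, rfl⟩
    | func f _ => exact Empty.elim f
  match l, R with
  | 0, R => exact Empty.elim R
  | l + 3, R => exact Empty.elim R
  | 1, R =>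
      by_cases hR : R = (0 : Fin 2)
      · subst hR
        obtain ⟨y, hy⟩ := hts 1 ts 0
        match y, hy with
        | Sum.inl e, _ => exact Empty.elim e
        | Sum.inr j, hy =>
          have hts' : ts = fun _ => .var (Sum.inr j) := by
            funext i
            rw [Subsingleton.elim i 0, hy]
          rw [hts']
          have h1 : substAtom @θ (show LWC.Relations 1 from (0 : Fin 2))
              (fun _ => (.var (Sum.inr j) : LWC.Term (Empty ⊕ Fin k))) = θ j := by
            rw [substAtom]
            exact if_pos rfl
          rw [h1, H]
          exact Iff.rfl
      · have hR1 : R = (1 : Fin 2) := by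
          have h2 := (show Fin 2 from R).isLt
          have h0 : (show Fin 2 from R).val ≠ 0 := fun h => hR (Fin.ext h)
          have h3 : (show Fin 2 from R).val = 1 := by omega
          exact Fin.ext h3
        subst hR1
        show Rl α B X (.rel (show LWC.Relations 1 from (1 : Fin 2)) ts) xs ↔ _
        unfold Rl
        show ((@Term.realize LWC _ (strWC α B X) _ (Sum.elim default xs) (ts 0)).1 ∈ X) ↔
          ((@Term.realize LWC _ (strWC α Areal X) _ (Sum.elim default xs) (ts 0)).1 ∈ X)
        rw [term_realize_eq (B := B) (X := X) (B' := Areal) (X' := X)]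
  | 2, R =>
      rw [substAtom]
      show Rl α B X (.rel R ts) xs ↔ _
      unfold Rl
      show ((@Term.realize LWC _ (strWC α B X) _ (Sum.elim default xs) (ts 0)).1 ∈
          (@Term.realize LWC _ (strWC α B X) _ (Sum.elim default xs) (ts 1)).1) ↔
        ((@Term.realize LWC _ (strWC α Areal X) _ (Sum.elim default xs) (ts 0)).1 ∈
          (@Term.realize LWC _ (strWC α Areal X) _ (Sum.elim default xs) (ts 1)).1)
      rw [term_realize_eq (B := B) (X := X) (B' := Areal) (X' := X),
        term_realize_eq (B := B) (X := X) (B' := Areal) (X' := X)]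

lemma rl_substA {Areal : Set ZFSet.{0}} (θ : ∀ {k : ℕ}, Fin k → BF k)
    (H : ∀ {k : ℕ} (x : Fin k) (xs : Fin k → VType α), Rl α B X (θ x) xs ↔ (xs x).1 ∈ Areal) :
    ∀ {k : ℕ} (φ : BF k) (xs : Fin k → VType α),
      Rl α B X (substA @θ φ) xs ↔ Rl α Areal X φ xs := by
  intro k φ
  induction φ with
  | falsum => exact fun _ => Iff.rfl
  | equal t₁ t₂ =>
      intro xs
      show (@Term.realize LWC _ (strWC α B X) _ (Sum.elim default xs) t₁ =
          @Term.realize LWC _ (strWC α B X) _ (Sum.elim default xs) t₂) ↔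
        (@Term.realize LWC _ (strWC α Areal X) _ (Sum.elim default xs) t₁ =
          @Term.realize LWC _ (strWC α Areal X) _ (Sum.elim default xs) t₂)
      rw [term_realize_eq (B := B) (X := X) (B' := Areal) (X' := X),
        term_realize_eq (B := B) (X := X) (B' := Areal) (X' := X)]
  | rel R ts => exact fun xs => rl_substAtom @θ @H R ts xs
  | imp f g ihf ihg =>
      intro xs
      show (Rl α B X (substA @θ f) xs → Rl α B X (substA @θ g) xs) ↔
        (Rl α Areal X f xs → Rl α Areal X g xs)
      rw [ihf, ihg]
  | all f ihf =>
      intro xs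
      show (∀ a, Rl α B X (substA @θ f) (Fin.snoc xs a)) ↔ ∀ a, Rl α Areal X f (Fin.snoc xs a)
      exact forall_congr' fun a => ihf _

end WC
namespace WC
open FirstOrder.Language FirstOrder.Language.BoundedFormula

variable {α : Ordinal.{0}} {B X : Set ZFSet.{0}} {k : ℕ}

lemma exists_rank (γ : Ordinal.{0}) : ∃ b : ZFSet.{0}, b.rank = γ := by
  induction γ using Ordinal.induction with
  | h γ IH =>
    choose f hf using IH
    refine ⟨ZFSet.range (fun x : γ.ToType =>
      f (((Ordinal.ToType.mk (o := γ))).symm x).1 (Set.mem_Iio.1 (((Ordinal.ToType.mk (o := γ))).symm x).2)), ?_⟩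
    rw [ZFSet.rank_range]
    simp_rw [hf]
    show Ordinal.lsub _ = γ
    apply le_antisymm
    · exact Ordinal.lsub_le fun x => (((Ordinal.ToType.mk (o := γ))).symm x).2
    · refine le_of_forall_lt fun δ hδ => ?_
      have := Ordinal.lt_lsub
        (fun x : γ.ToType => ((((Ordinal.ToType.mk (o := γ))).symm x : Set.Iio γ) : Ordinal))
        ((Ordinal.ToType.mk (o := γ)) ⟨δ, hδ⟩)
      simpa using this

lemma rlS_inf {φ ψ : LWC.Sentence} :
    RlS α B X (φ ⊓ ψ) ↔ RlS α B X φ ∧ RlS α B X ψ := rl_inf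

lemma rlS_top : RlS α B X ⊤ := rl_top.2 trivial

lemma rlS_foldr (l : List LWC.Sentence) :
    RlS α B X (l.foldr (· ⊓ ·) ⊤) ↔ ∀ φ ∈ l, RlS α B X φ := by
  induction l with
  | nil => simpa using rlS_top
  | cons φ l ih =>
      rw [List.foldr_cons, rlS_inf, ih]
      simp

open scoped Classical in
/-- the `i`-th conjunct: the relativization of `ψ i` if it holds at `κ`, else `⊤` -/
noncomputable def bodyF (κ : Ordinal.{0}) {n : ℕ} (ψ : Fin n → LWC.Sentence)
    (A : Fin n → Set ZFSet.{0}) (i : Fin n) : LWC.Sentence :=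
  if SatPi11 (ψ i) κ (A i) then substA (fun {k} x => thetaF i.1 x) (ψ i) else ⊤

/-- the combined Π¹₁ sentence -/
noncomputable def PsiF (κ : Ordinal.{0}) {n : ℕ} (ψ : Fin n → LWC.Sentence)
    (A : Fin n → Set ZFSet.{0}) : LWC.Sentence :=
  markerF n ⊓ ((List.finRange n).map fun i => clF i.1 ⊓ bodyF κ ψ A i).foldr (· ⊓ ·) ⊤

end WC

open WC

/-- If `κ` is weakly compact, then the weakly compact filter, generated by the sets
`X_{A,φ} = {α < κ : V_κ ⊨ φ(A) → V_α ⊨ φ(A ∩ V_α)}`, is a proper filter on `κ`: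
every finite intersection of generators is unbounded in `κ` (in particular nonempty). -/
theorem stmt9 (κ : Ordinal.{0}) (hκ : WeaklyCompactWC κ)
    (n : ℕ) (ψ : Fin n → LWC.Sentence) (A : Fin n → Set ZFSet.{0}) :
    ∀ β < κ, ∃ α, β < α ∧
      α ∈ ⋂ i : Fin n, {α : Ordinal | α < κ ∧ (SatPi11 (ψ i) κ (A i) → SatPi11 (ψ i) α (A i))} := by
  classical
  intro β hβ
  -- κ is positive
  have htop : SatPi11 ⊤ κ ∅ := fun X =>
    (@FirstOrder.Language.BoundedFormula.realize_top LWC (VType κ) (strWC κ ∅ X) _ _ default default).2 trivial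
  have h0 : (0 : Ordinal) < κ := by
    obtain ⟨a, ha, -⟩ := hκ ⊤ ∅ htop
    exact lt_of_le_of_lt zero_le ha
  -- κ is closed under successor
  have hsucc : ∀ γ, γ < κ → γ + 1 < κ := by
    intro γ hγ
    by_contra hc
    push_neg at hc
    obtain ⟨b, hb⟩ := exists_rank γ
    have hsat : SatPi11 existsAF κ {b} := by
      intro Xs
      show RlS κ {b} Xs existsAF
      rw [rlS_existsAF]
      exact ⟨⟨b, hb ▸ hγ⟩, rfl⟩
    obtain ⟨a, ha, hsa⟩ := hκ existsAF {b} hsat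
    obtain ⟨x, hx⟩ := rlS_existsAF.1 (hsa ∅)
    have hxb : x.1 = b := hx
    have h1 : γ < a := by rw [← hb, ← hxb]; exact x.2
    have h2 : γ + 1 ≤ a := by
      rw [Ordinal.add_one_eq_succ]
      exact Order.succ_le_of_lt h1
    exact absurd (hc.trans h2) (not_le.2 ha)
  have k1 : ∀ o, o < κ → Order.succ o < κ := fun o ho => by
    rw [← Ordinal.add_one_eq_succ]; exact hsucc o ho
  have hnat : ∀ m : ℕ, (m : Ordinal) < κ := by
    intro m
    induction m with
    | zero => simpa using h0
    | succ m ih => rw [Nat.cast_succ]; exact hsucc _ ih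
  have hpairlt : ∀ (m : ℕ) (x : ZFSet.{0}), x.rank < κ →
      (ZFSet.pair (towerZ m) x).rank < κ := by
    intro m x hx
    have hrw : ZFSet.pair (towerZ m) x = ({{towerZ m}, {towerZ m, x}} : ZFSet) := rfl
    rw [hrw]
    simp only [ZFSet.rank_pair, ZFSet.rank_singleton, rank_towerZ]
    exact max_lt (k1 _ (k1 _ (hnat m))) (k1 _ (max_lt (k1 _ (hnat m)) (k1 _ hx)))
  obtain ⟨b, hb⟩ := exists_rank β
  -- the coded parameter
  set Bc : Set ZFSet.{0} := {p | (∃ i : Fin n, ∃ x ∈ A i, p = ZFSet.pair (towerZ (i.1+1)) x) ∨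
    p = ZFSet.pair (towerZ (n+1)) b} with hBc
  have decode : ∀ (i : Fin n) (x : ZFSet.{0}),
      ZFSet.pair (towerZ (i.1+1)) x ∈ Bc ↔ x ∈ A i := by
    intro i x
    constructor
    · rintro (⟨j, y, hy, he⟩ | he)
      · obtain ⟨h1, h2⟩ := ZFSet.pair_injective he
        have : i = j := Fin.ext (by have := towerZ_injective h1; omega)
        rw [this, h2]
        exact hy
      · exfalso
        obtain ⟨h1, -⟩ := ZFSet.pair_injective he
        have := towerZ_injective h1
        have := i.2
        omega
    · intro hx
      exact Or.inl ⟨i, x, hx, rfl⟩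
  have decodeM : ∀ x : ZFSet.{0}, ZFSet.pair (towerZ (n+1)) x ∈ Bc ↔ x = b := by
    intro x
    constructor
    · rintro (⟨j, y, hy, he⟩ | he)
      · exfalso
        obtain ⟨h1, -⟩ := ZFSet.pair_injective he
        have := towerZ_injective h1
        have := j.2
        omega
      · exact (ZFSet.pair_injective he).2
    · rintro rfl
      exact Or.inr rfl
  -- substitution hypothesis wherever closure holds
  have Hθ : ∀ (α' : Ordinal.{0}) (Xs : Set ZFSet.{0}) (i : Fin n),
      (∀ x : VType α', (ZFSet.pair (towerZ (i.1+1)) x.1).rank < α') →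
      ∀ {k : ℕ} (x : Fin k) (xs : Fin k → VType α'),
        Rl α' Bc Xs (thetaF i.1 x) xs ↔ (xs x).1 ∈ A i := by
    intro α' Xs i hcl k x xs
    rw [rl_thetaF]
    constructor
    · rintro ⟨-, hmem⟩
      exact (decode i _).1 hmem
    · intro hx
      exact ⟨hcl (xs x), (decode i _).2 hx⟩
  -- Ψ holds at κ
  have hΨκ : SatPi11 (PsiF κ ψ A) κ Bc := by
    intro Xs
    show RlS κ Bc Xs (PsiF κ ψ A)
    rw [PsiF, rlS_inf]
    constructor
    · rw [rlS_markerF]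
      exact ⟨⟨b, hb ▸ hβ⟩, hpairlt _ _ (hb ▸ hβ), (decodeM b).2 rfl⟩
    · rw [rlS_foldr]
      intro φ hφ
      rw [List.mem_map] at hφ
      obtain ⟨i, -, rfl⟩ := hφ
      rw [rlS_inf]
      constructor
      · rw [rlS_clF]
        intro x
        exact hpairlt _ _ x.2
      · by_cases hact : SatPi11 (ψ i) κ (A i)
        · rw [show bodyF κ ψ A i = substA (fun {k} x => thetaF i.1 x) (ψ i) from if_pos hact]
          show Rl κ Bc Xs (substA (fun {k} x => thetaF i.1 x) (ψ i)) default
          rw [rl_substA (fun {k} x => thetaF i.1 x) (Hθ κ Xs i (fun x => hpairlt _ _ x.2))]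
          exact hact Xs
        · rw [show bodyF κ ψ A i = ⊤ from if_neg hact]
          exact rlS_top
  obtain ⟨a, haκ, hΨa⟩ := hκ (PsiF κ ψ A) Bc hΨκ
  -- extract the marker: β < a
  have hmark := (rlS_inf.1 (hΨa ∅)).1
  rw [rlS_markerF] at hmark
  obtain ⟨x, -, hxB⟩ := hmark
  have hxb : x.1 = b := (decodeM _).1 hxB
  have hβa : β < a := by rw [← hb, ← hxb]; exact x.2
  refine ⟨a, hβa, ?_⟩
  rw [Set.mem_iInter]
  intro i
  refine ⟨haκ, fun hact => ?_⟩
  intro Xs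
  have h2 := (rlS_inf.1 (hΨa Xs)).2
  rw [rlS_foldr] at h2
  have h3 := h2 (clF i.1 ⊓ bodyF κ ψ A i) (List.mem_map.2 ⟨i, List.mem_finRange i, rfl⟩)
  rw [rlS_inf, rlS_clF] at h3
  obtain ⟨hcl, hbody⟩ := h3
  rw [show bodyF κ ψ A i = substA (fun {k} x => thetaF i.1 x) (ψ i) from if_pos hact] at hbody
  rw [rlS_eq, rl_substA (fun {k} x => thetaF i.1 x) (Hθ a Xs i hcl)] at hbody
  exact hbody
end
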